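/- The polynomial g(t) = 4t^3 + t^2 + 2t - 1 has a unique real root r in the open interval (0,1), and r is the unique complex root of g of minimal absolute value; consequently 1/r is a Perron number. -/

import Mathlib

/-- A Perron number: a real algebraic integer `τ > 1` all of whose Galois
conjugates other than `τ` itself have absolute value strictly less than `τ`. -/
def IsPerron (τ : ℝ) : Prop :=
  IsIntegral ℤ τ ∧ 1 < τ ∧
    ∀ z : ℂ, Polynomial.aeval z (minpoly ℤ τ) = 0 → z ≠ (τ : ℂ) →
      ‖z‖ < τ

/-- Every complex root of `4t³+t²+2t-1` other than the real root `r ∈ (0,1)`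
has absolute value strictly bigger than `r`. -/
lemma key_abs (r : ℝ) (hr0 : 0 < r) (hg : 4*r^3 + r^2 + 2*r - 1 = 0) :
    ∀ z : ℂ, 4*z^3 + z^2 + 2*z - 1 = 0 → z ≠ (r:ℂ) → (r:ℝ) < ‖z‖ := by
  intro z hz hne
  have hgC : 4*(r:ℂ)^3 + (r:ℂ)^2 + 2*(r:ℂ) - 1 = 0 := by
    exact_mod_cast congrArg (Complex.ofReal) hg
  have hzr : z - (r:ℂ) ≠ 0 := sub_ne_zero.2 hne
  have hfac : (z - r) * (4*z^2 + (1+4*(r:ℂ))*z + (2+(r:ℂ)+4*(r:ℂ)^2)) = 0 := by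
    linear_combination hz - hgC
  have hq : 4*z^2 + (1+4*(r:ℂ))*z + (2+(r:ℂ)+4*(r:ℂ)^2) = 0 :=
    (mul_eq_zero.1 hfac).resolve_left hzr
  have hn : z * (starRingEnd ℂ) z = (Complex.normSq z : ℂ) := Complex.mul_conj z
  have hc2 : z + (starRingEnd ℂ) z = 2*(z.re : ℂ) := by
    have := Complex.add_conj z; push_cast at this; exact this
  by_cases him : z.im = 0
  · -- z is real : contradiction with negative discriminant
    have hzx : z = (z.re : ℂ) := by
      apply Complex.ext <;> simp [him]
    rw [hzx] at hq
    have hx : 4*z.re^2 + (1+4*r)*z.re + (2+r+4*r^2) = 0 := by exact_mod_cast hq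
    nlinarith [sq_nonneg (8*z.re + 1 + 4*r), hr0, sq_nonneg r]
  · have heq : z * ((4*Complex.normSq z - (2+r+4*r^2) : ℝ) : ℂ)
        = (-(((1+4*r)*Complex.normSq z + 2*(2+r+4*r^2)*z.re) : ℝ) : ℂ) := by
      push_cast
      linear_combination (starRingEnd ℂ z) * hq - (4*z + (1+4*(r:ℂ))) * hn
        - (2+(r:ℂ)+4*(r:ℂ)^2) * hc2
    have him2 := congrArg Complex.im heq
    simp only [Complex.mul_im, Complex.ofReal_im, Complex.ofReal_re, mul_zero,
      zero_add, add_zero, Complex.neg_im, neg_zero] at him2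
    have hcoef : 4*Complex.normSq z - (2+r+4*r^2) = 0 := by
      rcases mul_eq_zero.1 him2 with h | h
      · exact absurd h him
      · exact h
    have hN : Complex.normSq z = (2+r+4*r^2)/4 := by linarith
    have habs : (‖z‖)^2 = (2+r+4*r^2)/4 := by rw [Complex.sq_norm, hN]
    have : r^2 < (‖z‖)^2 := by nlinarith
    exact lt_of_pow_lt_pow_left₀ 2 (norm_nonneg z) this

theorem stmt_6 :
    ∃ r : ℝ, r ∈ Set.Ioo (0 : ℝ) 1 ∧
      4 * r ^ 3 + r ^ 2 + 2 * r - 1 = 0 ∧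
      (∀ r' : ℝ, r' ∈ Set.Ioo (0 : ℝ) 1 →
        4 * r' ^ 3 + r' ^ 2 + 2 * r' - 1 = 0 → r' = r) ∧
      (∀ z : ℂ, 4 * z ^ 3 + z ^ 2 + 2 * z - 1 = 0 →
        z ≠ (r : ℂ) → (r : ℝ) < ‖z‖) ∧
      IsPerron (1 / r) := by
  set f : ℝ → ℝ := fun t => 4*t^3 + t^2 + 2*t - 1 with hf
  have hmono : StrictMono f := by
    intro a b hab
    have hpos : 0 < 4*(a^2+a*b+b^2) + a + b + 2 := by
      nlinarith [sq_nonneg (4*(a+b)+1), sq_nonneg a, sq_nonneg b, sq_nonneg (a-b)]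
    simp only [hf]
    nlinarith [mul_pos (sub_pos.2 hab) hpos]
  have hcont : Continuous f := by fun_prop
  have himage := intermediate_value_Ioo (by norm_num : (0:ℝ) ≤ 1) hcont.continuousOn
  have h0 : (0:ℝ) ∈ Set.Ioo (f 0) (f 1) := by
    constructor <;> norm_num [hf]
  obtain ⟨r, hrmem, hr⟩ := himage h0
  have hr0 : 0 < r := hrmem.1
  have hr1 : r < 1 := hrmem.2
  have hg : 4*r^3 + r^2 + 2*r - 1 = 0 := hr
  refine ⟨r, hrmem, hg, ?_, key_abs r hr0 hg, ?_, ?_, ?_⟩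
  · -- uniqueness
    intro r' _ hg'
    refine hmono.injective ?_
    show 4*r'^3 + r'^2 + 2*r' - 1 = 4*r^3 + r^2 + 2*r - 1
    rw [hg', hg]
  · -- integrality of 1/r
    refine ⟨Polynomial.X^3 - Polynomial.C 2 * Polynomial.X^2 - Polynomial.X
      - Polynomial.C 4, by monicity!, ?_⟩
    have hrne : r ≠ 0 := ne_of_gt hr0
    rw [← Polynomial.aeval_def]
    simp only [map_sub, map_mul, map_pow, Polynomial.aeval_X, Polynomial.aeval_C, map_ofNat]
    field_simp
    linear_combination (-1 : ℝ)*hg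
  · exact one_lt_one_div hr0 hr1
  · -- conjugates of 1/r
    intro z hz hne
    have hrne : r ≠ 0 := ne_of_gt hr0
    have haev : Polynomial.aeval (1/r)
        (Polynomial.X^3 - Polynomial.C 2 * Polynomial.X^2 - Polynomial.X
          - Polynomial.C 4 : Polynomial ℤ) = 0 := by
      simp only [map_sub, map_mul, map_pow, Polynomial.aeval_X, Polynomial.aeval_C, map_ofNat]
      field_simp
      linear_combination (-1 : ℝ)*hg
    have hint : IsIntegral ℤ (1/r) :=
      ⟨Polynomial.X^3 - Polynomial.C 2 * Polynomial.X^2 - Polynomial.X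
        - Polynomial.C 4, by monicity!, haev⟩
    have hdvd : minpoly ℤ (1/r) ∣ (Polynomial.X^3 - Polynomial.C 2 * Polynomial.X^2
        - Polynomial.X - Polynomial.C 4 : Polynomial ℤ) :=
      minpoly.isIntegrallyClosed_dvd hint haev
    obtain ⟨q, hpq⟩ := hdvd
    have hzp : z^3 - 2*z^2 - z - 4 = 0 := by
      have h := congrArg (Polynomial.aeval z) hpq
      rw [map_mul, hz, zero_mul] at h
      simpa only [map_sub, map_mul, map_pow, Polynomial.aeval_X, Polynomial.aeval_C,
        eq_comm, Int.cast_ofNat, map_ofNat] using h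
    have hz0 : z ≠ 0 := by
      intro h; rw [h] at hzp; norm_num at hzp
    set w : ℂ := z⁻¹ with hw
    have hwroot : 4*w^3 + w^2 + 2*w - 1 = 0 := by
      rw [hw]
      field_simp
      linear_combination (-1 : ℂ)*hzp
    have hwne : w ≠ (r:ℂ) := by
      intro h
      apply hne
      rw [show z = w⁻¹ by rw [hw, inv_inv], h]
      push_cast
      rw [one_div]
    have hlt : (r:ℝ) < ‖w‖ := key_abs r hr0 hg w hwroot hwne
    have habsz : ‖z‖ = (‖w‖)⁻¹ := by
      rw [show z = w⁻¹ by rw [hw, inv_inv], norm_inv]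
    rw [habsz, one_div]
    exact inv_strictAnti₀ hr0 hlt
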